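/- arXiv:2312.06957 — 2 statements merged into one kernel-verified Lean document; each statement's English description precedes it below -/
import Mathlib

section
/- Suppose a nonnegative real sequence (ξ_t)_{t=1}^{T} satisfies ξ_t ≤ min{A, η_t G²} for all t, where the learning rates satisfy C/η_t = ε + ∑_{τ=1}^{t−1} ξ_τ for constants C > 0, ε > 0, G > 0, A > 0. Then (∑_{t=1}^{T} ξ_t)² ≤ ∑_{t=1}^{T} ξ_t² + 2 ∑_{t=1}^{T} ξ_t (C/η_t − ε) ≤ A² T + 2 G² C T, hence ∑_{t=1}^{T} ξ_t ≤ √((A² + 2G²C) T). -/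
lemma sq_sum_aux (ξ : ℕ → ℝ) (T : ℕ) :
    (∑ t ∈ Finset.Icc 1 T, ξ t) ^ 2
      = ∑ t ∈ Finset.Icc 1 T, (ξ t) ^ 2
        + 2 * ∑ t ∈ Finset.Icc 1 T, ξ t * ∑ τ ∈ Finset.Icc 1 (t - 1), ξ τ := by
  induction T with
  | zero => simp
  | succ n ih =>
    rw [Finset.sum_Icc_succ_top (Nat.succ_le_succ (Nat.zero_le n)),
        Finset.sum_Icc_succ_top (Nat.succ_le_succ (Nat.zero_le n)),
        Finset.sum_Icc_succ_top (Nat.succ_le_succ (Nat.zero_le n))]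
    simp only [Nat.add_sub_cancel]
    nlinarith [ih]

/-- Adaptive learning rate sum bound: if `ξ_t ≤ min{A, η_t G²}` with
`C/η_t = ε + ∑_{τ<t} ξ_τ`, then
`(∑ξ_t)² ≤ ∑ξ_t² + 2∑ξ_t(C/η_t − ε) ≤ A²T + 2G²CT`,
hence `∑ξ_t ≤ √((A² + 2G²C)T)`. -/
theorem stmt7 (T : ℕ) (hT : 1 ≤ T) (C ε G A : ℝ)
    (hC : 0 < C) (hε : 0 < ε) (hG : 0 < G) (hA : 0 < A)
    (ξ η : ℕ → ℝ) (hξ0 : ∀ t, 0 ≤ ξ t) (hηpos : ∀ t, 0 < η t)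
    (hrate : ∀ t, C / η t = ε + ∑ τ ∈ Finset.Icc 1 (t - 1), ξ τ)
    (hbound : ∀ t, ξ t ≤ min A (η t * G ^ 2)) :
    (∑ t ∈ Finset.Icc 1 T, ξ t) ^ 2
        ≤ ∑ t ∈ Finset.Icc 1 T, (ξ t) ^ 2
          + 2 * ∑ t ∈ Finset.Icc 1 T, ξ t * (C / η t - ε)
      ∧ ∑ t ∈ Finset.Icc 1 T, (ξ t) ^ 2
          + 2 * ∑ t ∈ Finset.Icc 1 T, ξ t * (C / η t - ε)
            ≤ A ^ 2 * T + 2 * G ^ 2 * C * T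
      ∧ ∑ t ∈ Finset.Icc 1 T, ξ t ≤ Real.sqrt ((A ^ 2 + 2 * G ^ 2 * C) * T) := by
  have hsub : ∀ t, ξ t * (C / η t - ε) = ξ t * ∑ τ ∈ Finset.Icc 1 (t - 1), ξ τ := by
    intro t; rw [hrate t]; ring
  have h1 : (∑ t ∈ Finset.Icc 1 T, ξ t) ^ 2
      ≤ ∑ t ∈ Finset.Icc 1 T, (ξ t) ^ 2
        + 2 * ∑ t ∈ Finset.Icc 1 T, ξ t * (C / η t - ε) := by
    have heq : ∑ t ∈ Finset.Icc 1 T, ξ t * (C / η t - ε)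
        = ∑ t ∈ Finset.Icc 1 T, ξ t * ∑ τ ∈ Finset.Icc 1 (t - 1), ξ τ :=
      Finset.sum_congr rfl fun t _ => hsub t
    rw [sq_sum_aux ξ T, heq]
  have hcard : ((Finset.Icc 1 T).card : ℝ) = T := by
    rw [Nat.card_Icc]; simp
  have h2a : ∑ t ∈ Finset.Icc 1 T, (ξ t) ^ 2 ≤ A ^ 2 * T := by
    calc ∑ t ∈ Finset.Icc 1 T, (ξ t) ^ 2 ≤ ∑ t ∈ Finset.Icc 1 T, A ^ 2 := by
          apply Finset.sum_le_sum
          intro t _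
          have h := (hbound t).trans (min_le_left _ _)
          nlinarith [hξ0 t]
      _ = A ^ 2 * T := by rw [Finset.sum_const, nsmul_eq_mul, hcard]; ring
  have h2b : ∑ t ∈ Finset.Icc 1 T, ξ t * (C / η t - ε) ≤ G ^ 2 * C * T := by
    calc ∑ t ∈ Finset.Icc 1 T, ξ t * (C / η t - ε)
        ≤ ∑ t ∈ Finset.Icc 1 T, G ^ 2 * C := by
          apply Finset.sum_le_sum
          intro t _
          have hη := hηpos t
          have hb := (hbound t).trans (min_le_right _ _)
          have : ξ t * (C / η t - ε) ≤ ξ t * (C / η t) := by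
            have : C / η t - ε ≤ C / η t := by linarith
            nlinarith [hξ0 t]
          calc ξ t * (C / η t - ε) ≤ ξ t * (C / η t) := this
            _ ≤ (η t * G ^ 2) * (C / η t) := by
                apply mul_le_mul_of_nonneg_right hb (le_of_lt (div_pos hC hη))
            _ = G ^ 2 * C := by field_simp
      _ = G ^ 2 * C * T := by rw [Finset.sum_const, nsmul_eq_mul, hcard]; ring
  have h2 : ∑ t ∈ Finset.Icc 1 T, (ξ t) ^ 2
      + 2 * ∑ t ∈ Finset.Icc 1 T, ξ t * (C / η t - ε)
      ≤ A ^ 2 * T + 2 * G ^ 2 * C * T := by linarith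
  refine ⟨h1, h2, ?_⟩
  have hS0 : 0 ≤ ∑ t ∈ Finset.Icc 1 T, ξ t := Finset.sum_nonneg fun t _ => hξ0 t
  have hsq : (∑ t ∈ Finset.Icc 1 T, ξ t) ^ 2 ≤ (A ^ 2 + 2 * G ^ 2 * C) * T := by
    nlinarith
  have := Real.sqrt_le_sqrt hsq
  rwa [Real.sqrt_sq hS0] at this
end

section
/- Adaptive learning rate sum bound for OptIOMDA: if nonnegative residuals δ_t satisfy δ_t ≤ 4 min{√2 D G, η_t G²} and the learning rates are set by (2D² + LP)/η_t = ε + ∑_{τ=1}^{t−1} δ_τ with ε > 0, then (∑_{t=1}^{T} δ_t)² ≤ 32 D² G² T + 8 G² (2D² + LP) T, hence ∑_{t=1}^{T} δ_t ≤ G√(8(6D² + LP) T). -/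
/-- Adaptive learning rate sum bound for OptIOMDA:
(∑δ_t)² ≤ 32D²G²T + 8G²(2D²+LP)T, hence ∑δ_t ≤ G√(8(6D²+LP)T). -/
theorem stmt16 (T : ℕ) (hT : 1 ≤ T) (D G L P ε : ℝ)
    (hD : 0 < D) (hG : 0 < G) (hL : 0 < L) (hP : 0 < P) (hε : 0 < ε)
    (δ η : ℕ → ℝ) (hδ0 : ∀ t, 0 ≤ δ t) (hηpos : ∀ t, 0 < η t)
    (hrate : ∀ t, (2 * D ^ 2 + L * P) / η t = ε + ∑ τ ∈ Finset.Icc 1 (t - 1), δ τ)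
    (hbound : ∀ t, δ t ≤ 4 * min (Real.sqrt 2 * D * G) (η t * G ^ 2)) :
    (∑ t ∈ Finset.Icc 1 T, δ t) ^ 2
        ≤ 32 * D ^ 2 * G ^ 2 * T + 8 * G ^ 2 * (2 * D ^ 2 + L * P) * T
      ∧ ∑ t ∈ Finset.Icc 1 T, δ t
        ≤ G * Real.sqrt (8 * (6 * D ^ 2 + L * P) * T) := by
  have hC : 0 < 2 * D ^ 2 + L * P := by positivity
  have hS0 : ∀ n : ℕ, 0 ≤ ∑ t ∈ Finset.Icc 1 n, δ t := fun n =>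
    Finset.sum_nonneg fun t _ => hδ0 t
  have key : ∀ n : ℕ, (ε + ∑ t ∈ Finset.Icc 1 n, δ t) ^ 2
      ≤ ε ^ 2 + (32 * D ^ 2 * G ^ 2 + 8 * G ^ 2 * (2 * D ^ 2 + L * P)) * n := by
    intro n
    induction n with
    | zero => simp
    | succ n ih =>
      have hsum : ∑ t ∈ Finset.Icc 1 (n + 1), δ t
          = (∑ t ∈ Finset.Icc 1 n, δ t) + δ (n + 1) :=
        Finset.sum_Icc_succ_top (by omega) δ
      have hA : ε + ∑ t ∈ Finset.Icc 1 n, δ t = (2 * D ^ 2 + L * P) / η (n + 1) := by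
        rw [hrate (n + 1)]; simp
      have hδle : δ (n + 1) ≤ 4 * (η (n + 1) * G ^ 2) := by
        have := min_le_right (Real.sqrt 2 * D * G) (η (n + 1) * G ^ 2)
        nlinarith [hbound (n + 1)]
      have h1 : (ε + ∑ t ∈ Finset.Icc 1 n, δ t) * δ (n + 1)
          ≤ 4 * G ^ 2 * (2 * D ^ 2 + L * P) := by
        rw [hA]
        have hpos := hηpos (n + 1)
        have hnn : 0 ≤ (2 * D ^ 2 + L * P) / η (n + 1) := by positivity
        calc (2 * D ^ 2 + L * P) / η (n + 1) * δ (n + 1)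
            ≤ (2 * D ^ 2 + L * P) / η (n + 1) * (4 * (η (n + 1) * G ^ 2)) :=
              mul_le_mul_of_nonneg_left hδle hnn
          _ = 4 * G ^ 2 * (2 * D ^ 2 + L * P) := by field_simp
      have h2 : δ (n + 1) ^ 2 ≤ 32 * D ^ 2 * G ^ 2 := by
        have hle : δ (n + 1) ≤ 4 * (Real.sqrt 2 * D * G) := by
          have := min_le_left (Real.sqrt 2 * D * G) (η (n + 1) * G ^ 2)
          nlinarith [hbound (n + 1)]
        have hs : Real.sqrt 2 ^ 2 = 2 := Real.sq_sqrt (by norm_num)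
        nlinarith [hδ0 (n + 1), Real.sqrt_nonneg 2]
      rw [hsum]
      push_cast
      nlinarith [ih, h1, h2]
  have hT' := key T
  have hS := hS0 T
  constructor
  · nlinarith [hT']
  · have harg : (0 : ℝ) ≤ 8 * (6 * D ^ 2 + L * P) * T := by positivity
    have hR : (G * Real.sqrt (8 * (6 * D ^ 2 + L * P) * T)) ^ 2
        = G ^ 2 * (8 * (6 * D ^ 2 + L * P) * T) := by
      rw [mul_pow, Real.sq_sqrt harg]
    have hRnn : 0 ≤ G * Real.sqrt (8 * (6 * D ^ 2 + L * P) * T) := by positivity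
    nlinarith [hT', hS, hRnn, hR]
end
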